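/- Let q be an odd prime power and let a₀, b₀ ∈ F_q be nonzero, with a₀b₀ a nonsquare if q ≡ 1 (mod 4) and a₀b₀ a nonzero square if q ≡ 3 (mod 4). Then H has exactly (q+1)/2 points and K = H ∪ {⟨(a₀,b₀,0)⟩} is an arc in PG(2,q) of size (q+3)/2. -/

import Mathlib

noncomputable section

/-- Three points of PG(2,q) are collinear if they have linearly dependent representatives. -/
def Coll3 {F : Type*} [Field F] (P Q R : Projectivization F (Fin 3 → F)) : Prop :=
  ¬ LinearIndependent F ![P.rep, Q.rep, R.rep]

/-- A point is `S`-covered if it lies on a line through two distinct points of `S`. -/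
def PGCovered {F : Type*} [Field F] (S : Set (Projectivization F (Fin 3 → F)))
    (P : Projectivization F (Fin 3 → F)) : Prop :=
  ∃ Q ∈ S, ∃ R ∈ S, Q ≠ R ∧ Coll3 P Q R

/-- A point not in `S` is `S`-free if it is not `S`-covered. -/
def PGFree {F : Type*} [Field F] (S : Set (Projectivization F (Fin 3 → F)))
    (P : Projectivization F (Fin 3 → F)) : Prop :=
  P ∉ S ∧ ¬ PGCovered S P

lemma vec_ne_zero {F : Type*} [Field F] (v : Fin 3 → F) (i : Fin 3) (h : v i ≠ 0) : v ≠ 0 :=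
  fun hv => h (by simp [hv])

/-- The set `H = {⟨(1,s⁴,s²)⟩ : s ∈ F}` of points of PG(2,q). -/
def HSet (F : Type*) [Field F] : Set (Projectivization F (Fin 3 → F)) :=
  {P | ∃ s : F, P = Projectivization.mk F ![1, s ^ 4, s ^ 2] (vec_ne_zero _ 0 (by simp))}

/-- The conic `C : XY = Z²` in PG(2,q).  (Membership does not depend on the choice of
representative since the equation is homogeneous.) -/
def conicC (F : Type*) [Field F] : Set (Projectivization F (Fin 3 → F)) :=
  {P | P.rep 0 * P.rep 1 = P.rep 2 ^ 2}

/-- An arc: a set of points no three of which are collinear. -/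
def IsPGArc {F : Type*} [Field F] (S : Set (Projectivization F (Fin 3 → F))) : Prop :=
  ∀ P ∈ S, ∀ Q ∈ S, ∀ R ∈ S, P ≠ Q → P ≠ R → Q ≠ R → ¬ Coll3 P Q R

/-- A complete arc: an arc which cannot be extended to a larger arc. -/
def IsCompletePGArc {F : Type*} [Field F] (S : Set (Projectivization F (Fin 3 → F))) : Prop :=
  IsPGArc S ∧ ∀ P ∉ S, ¬ IsPGArc (insert P S)

/-! ### Auxiliary lemmas -/

/-- determinant of the 3×3 matrix with rows `u, v, w`. -/
def d3 {F : Type*} [Field F] (u v w : Fin 3 → F) : F := Matrix.det (Matrix.of ![u, v, w])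

lemma li_iff_d3 {F : Type*} [Field F] (u v w : Fin 3 → F) :
    LinearIndependent F ![u, v, w] ↔ d3 u v w ≠ 0 := by
  have h : (![u, v, w] : Fin 3 → Fin 3 → F) = (Matrix.of ![u, v, w]).row := rfl
  rw [h, Matrix.linearIndependent_rows_iff_isUnit, Matrix.isUnit_iff_isUnit_det,
    isUnit_iff_ne_zero, d3]

lemma d3_smul {F : Type*} [Field F] (a b c : F) (u v w : Fin 3 → F) :
    d3 (a • u) (b • v) (c • w) = a * b * c * d3 u v w := by
  simp [d3, Matrix.det_fin_three, Matrix.vecHead, Matrix.vecTail]; ring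

lemma coll3_mk_iff {F : Type*} [Field F] (u v w : Fin 3 → F) (hu : u ≠ 0) (hv : v ≠ 0)
    (hw : w ≠ 0) :
    Coll3 (Projectivization.mk F u hu) (Projectivization.mk F v hv)
      (Projectivization.mk F w hw) ↔ d3 u v w = 0 := by
  obtain ⟨a, ha⟩ := Projectivization.exists_smul_eq_mk_rep F u hu
  obtain ⟨b, hb⟩ := Projectivization.exists_smul_eq_mk_rep F v hv
  obtain ⟨c, hc⟩ := Projectivization.exists_smul_eq_mk_rep F w hw
  unfold Coll3
  rw [li_iff_d3, not_not, ← ha, ← hb, ← hc, Units.smul_def, Units.smul_def, Units.smul_def,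
    d3_smul]
  have habc : (a : F) * b * c ≠ 0 := by
    simp [a.ne_zero, b.ne_zero, c.ne_zero]
  rw [mul_eq_zero, or_iff_right habc]

lemma mkH_eq_iff {F : Type*} [Field F] (s t : F) :
    Projectivization.mk F ![1, s ^ 4, s ^ 2] (vec_ne_zero _ 0 (by simp))
      = Projectivization.mk F ![1, t ^ 4, t ^ 2] (vec_ne_zero _ 0 (by simp)) ↔ s ^ 2 = t ^ 2 := by
  rw [Projectivization.mk_eq_mk_iff]
  constructor
  · rintro ⟨c, hc⟩
    have h0 := congrFun hc 0
    have h2 := congrFun hc 2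
    simp [Units.smul_def] at h0 h2
    rw [h0] at h2; simpa using h2.symm
  · intro h
    refine ⟨1, ?_⟩
    funext i
    fin_cases i
    · simp
    · simp; rw [show (t : F) ^ 4 = (t ^ 2) ^ 2 by ring, ← h]; ring
    · simp [h]

lemma mkInf_ne_mkH {F : Type*} [Field F] (a₀ b₀ : F) (ha₀ : a₀ ≠ 0) (hb₀ : b₀ ≠ 0) (s : F) :
    Projectivization.mk F ![a₀, b₀, 0] (vec_ne_zero _ 0 (by simpa using ha₀))
      ≠ Projectivization.mk F ![1, s ^ 4, s ^ 2] (vec_ne_zero _ 0 (by simp)) := by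
  rw [Ne, Projectivization.mk_eq_mk_iff]
  rintro ⟨c, hc⟩
  have h1 := congrFun hc 1
  have h2 := congrFun hc 2
  simp [Units.smul_def] at h1 h2
  rw [h2] at h1
  simp at h1
  exact hb₀ h1.symm

lemma keyne {F : Type*} [Field F] [Fintype F] (q : ℕ) (hcard : Fintype.card F = q)
    (hodd : Odd q) (a₀ b₀ : F)
    (h1 : q % 4 = 1 → ¬ IsSquare (a₀ * b₀))
    (h3 : q % 4 = 3 → a₀ * b₀ ≠ 0 ∧ IsSquare (a₀ * b₀)) (s t : F) :
    a₀ * (s ^ 2 * t ^ 2) + b₀ ≠ 0 := by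
  intro h
  have hsq : ∃ r : F, -(a₀ * b₀) = r * r := ⟨a₀ * s * t, by linear_combination (-a₀) * h⟩
  have hodd2 : q % 2 = 1 := Nat.odd_iff.mp hodd
  rcases (show q % 4 = 1 ∨ q % 4 = 3 by omega) with h4 | h4
  · refine h1 h4 ?_
    have hneg1 : IsSquare (-1 : F) := by
      rw [FiniteField.isSquare_neg_one_iff, hcard]; omega
    obtain ⟨r, hr⟩ := hsq
    obtain ⟨i, hi⟩ := hneg1
    exact ⟨i * r, by linear_combination (i * i) * hr + (-(a₀ * b₀)) * hi⟩
  · obtain ⟨hne, hsq'⟩ := h3 h4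
    obtain ⟨v, hv⟩ := hsq'
    have hvne : v ≠ 0 := by rintro rfl; rw [mul_zero] at hv; exact hne hv
    obtain ⟨r, hr⟩ := hsq
    have : IsSquare (-1 : F) := by
      refine ⟨r * v⁻¹, ?_⟩
      field_simp
      linear_combination hr + hv
    rw [FiniteField.isSquare_neg_one_iff, hcard] at this
    omega

lemma card_squares {F : Type*} [Field F] [Fintype F] [DecidableEq F] (q : ℕ)
    (hcard : Fintype.card F = q) (hodd : Odd q) :
    (Finset.image (fun x : F => x ^ 2) Finset.univ).card = (q + 1) / 2 := by
  have h2 : (2 : F) ≠ 0 := by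
    intro h2
    obtain ⟨k, hk⟩ := hodd
    have hc : ((Fintype.card F : ℕ) : F) = 0 := FiniteField.cast_card_eq_zero F
    rw [hcard, hk] at hc
    push_cast at hc
    rw [h2] at hc
    simp at hc
  set T := Finset.image (fun x : F => x ^ 2) Finset.univ with hT
  have key : q = ∑ a ∈ T, (Finset.univ.filter (fun x : F => x ^ 2 = a)).card := by
    rw [← hcard, ← Finset.card_univ]
    exact Finset.card_eq_sum_card_image (fun x : F => x ^ 2) Finset.univ
  have hfib : ∀ a ∈ T, (Finset.univ.filter (fun x : F => x ^ 2 = a)).card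
      = if a = 0 then 1 else 2 := by
    intro a ha
    obtain ⟨y, -, hy⟩ := Finset.mem_image.mp ha
    split_ifs with h0
    · subst h0
      have h : (Finset.univ.filter (fun x : F => x ^ 2 = 0)) = {0} := by
        ext x; simp [pow_eq_zero_iff]
      rw [h]; simp
    · have hy0 : y ≠ 0 := by rintro rfl; simp at hy; exact h0 hy.symm
      have h : (Finset.univ.filter (fun x : F => x ^ 2 = a)) = {y, -y} := by
        ext x
        simp only [Finset.mem_filter, Finset.mem_univ, true_and, Finset.mem_insert,
          Finset.mem_singleton]
        rw [← hy, sq_eq_sq_iff_eq_or_eq_neg]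
      rw [h, Finset.card_insert_of_notMem (by
        simp only [Finset.mem_singleton]
        intro h; apply hy0
        have h2y : (2 : F) * y = 0 := by linear_combination h
        rcases mul_eq_zero.mp h2y with h' | h'
        · exact absurd h' h2
        · exact h'), Finset.card_singleton]
  have h0T : (0 : F) ∈ T := Finset.mem_image.mpr ⟨0, Finset.mem_univ _, by simp⟩
  have hsum : ∑ a ∈ T, (Finset.univ.filter (fun x : F => x ^ 2 = a)).card
      = ∑ a ∈ T, (if a = 0 then 1 else 2) := Finset.sum_congr rfl hfib
  rw [hsum] at key
  rw [← Finset.insert_erase h0T, Finset.sum_insert (Finset.notMem_erase _ _)] at key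
  norm_num at key
  rw [Finset.sum_ite_of_false (by intro a ha; exact Finset.ne_of_mem_erase ha)] at key
  rw [Finset.sum_const, smul_eq_mul, Finset.card_erase_of_mem h0T] at key
  have hpos : 0 < T.card := Finset.card_pos.mpr ⟨0, h0T⟩
  omega

lemma hset_ncard {F : Type*} [Field F] [Fintype F] (q : ℕ) (hcard : Fintype.card F = q)
    (hodd : Odd q) : (HSet F).ncard = (q + 1) / 2 := by
  classical
  set j : F → Projectivization F (Fin 3 → F) :=
    fun a => Projectivization.mk F ![1, a ^ 2, a] (vec_ne_zero _ 0 (by simp)) with hj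
  have hjs : ∀ s : F, Projectivization.mk F ![1, s ^ 4, s ^ 2] (vec_ne_zero _ 0 (by simp))
      = j (s ^ 2) := by
    intro s
    rw [hj]
    congr 1
    funext i
    fin_cases i <;> simp <;> ring
  have hjinj : Function.Injective j := by
    intro a b hab
    rw [hj] at hab
    simp only at hab
    rw [Projectivization.mk_eq_mk_iff] at hab
    obtain ⟨c, hc⟩ := hab
    have h0 := congrFun hc 0
    have h2 := congrFun hc 2
    simp [Units.smul_def] at h0 h2
    rw [h0] at h2; simpa using h2.symm
  have hHS : HSet F = j '' (↑(Finset.image (fun x : F => x ^ 2) Finset.univ) : Set F) := by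
    ext P
    constructor
    · rintro ⟨s, rfl⟩
      exact ⟨s ^ 2, by simp, (hjs s).symm⟩
    · rintro ⟨a, ha, rfl⟩
      simp only [Finset.coe_image, Set.mem_image] at ha
      obtain ⟨s, -, rfl⟩ := ha
      exact ⟨s, (hjs s).symm⟩
  rw [hHS, Set.ncard_image_of_injective _ hjinj, Set.ncard_coe_finset,
    card_squares q hcard hodd]

/-- `H` has exactly `(q+1)/2` points, and `K = H ∪ {⟨(a₀,b₀,0)⟩}` is an arc
of size `(q+3)/2`. -/
theorem stmt16 (F : Type*) [Field F] [Fintype F] (q : ℕ) (hcard : Fintype.card F = q)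
    (hodd : Odd q) (a₀ b₀ : F) (ha₀ : a₀ ≠ 0) (hb₀ : b₀ ≠ 0)
    (h1 : q % 4 = 1 → ¬ IsSquare (a₀ * b₀))
    (h3 : q % 4 = 3 → a₀ * b₀ ≠ 0 ∧ IsSquare (a₀ * b₀)) :
    (HSet F).ncard = (q + 1) / 2 ∧
    IsPGArc (HSet F ∪
      {Projectivization.mk F ![a₀, b₀, 0] (vec_ne_zero _ 0 (by simpa using ha₀))}) ∧
    (HSet F ∪
      {Projectivization.mk F ![a₀, b₀, 0] (vec_ne_zero _ 0 (by simpa using ha₀))}).ncard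
      = (q + 3) / 2 := by
  have hd1 : ∀ s t u : F, d3 ![1, s^4, s^2] ![1, t^4, t^2] ![1, u^4, u^2]
      = (t^2 - s^2) * (u^2 - s^2) * (t^2 - u^2) := by
    intro s t u; simp [d3, Matrix.det_fin_three, Matrix.vecHead, Matrix.vecTail]; ring
  have hd2 : ∀ s t : F, d3 ![a₀, b₀, 0] ![1, s^4, s^2] ![1, t^4, t^2]
      = (s^2 - t^2) * (a₀ * (s^2 * t^2) + b₀) := by
    intro s t; simp [d3, Matrix.det_fin_three, Matrix.vecHead, Matrix.vecTail]; ring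
  have hswap : ∀ u v w : Fin 3 → F, d3 v u w = - d3 u v w := by
    intro u v w; simp [d3, Matrix.det_fin_three, Matrix.vecHead, Matrix.vecTail]; ring
  have hcyc : ∀ u v w : Fin 3 → F, d3 v w u = d3 u v w := by
    intro u v w; simp [d3, Matrix.det_fin_three, Matrix.vecHead, Matrix.vecTail]; ring
  have hkey := keyne q hcard hodd a₀ b₀ h1 h3
  have hInfH := mkInf_ne_mkH a₀ b₀ ha₀ hb₀
  refine ⟨hset_ncard q hcard hodd, ?_, ?_⟩
  · -- the arc property
    intro P hP Q hQ R hR hPQ hPR hQR hcol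
    rcases hP with ⟨s, rfl⟩ | hP
    · rcases hQ with ⟨t, rfl⟩ | hQ
      · rcases hR with ⟨u, rfl⟩ | hR
        · -- HHH
          rw [coll3_mk_iff, hd1] at hcol
          have hst : s^2 ≠ t^2 := fun h => hPQ ((mkH_eq_iff s t).mpr h)
          have hsu : s^2 ≠ u^2 := fun h => hPR ((mkH_eq_iff s u).mpr h)
          have htu : t^2 ≠ u^2 := fun h => hQR ((mkH_eq_iff t u).mpr h)
          rcases mul_eq_zero.mp hcol with h | h
          · rcases mul_eq_zero.mp h with h | h
            · exact hst (sub_eq_zero.mp h).symm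
            · exact hsu (sub_eq_zero.mp h).symm
          · exact htu (sub_eq_zero.mp h)
        · -- H H Inf
          rw [Set.mem_singleton_iff] at hR; subst hR
          rw [coll3_mk_iff, hcyc, hd2] at hcol
          have hst : s^2 ≠ t^2 := fun h => hPQ ((mkH_eq_iff s t).mpr h)
          rcases mul_eq_zero.mp hcol with h | h
          · exact hst (sub_eq_zero.mp h)
          · exact hkey s t h
      · -- P = H, Q = Inf
        rw [Set.mem_singleton_iff] at hQ; subst hQ
        rcases hR with ⟨t, rfl⟩ | hR
        · rw [coll3_mk_iff] at hcol
          rw [hswap, hd2, neg_eq_zero] at hcol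
          have hst : s^2 ≠ t^2 := fun h => hPR ((mkH_eq_iff s t).mpr h)
          rcases mul_eq_zero.mp hcol with h | h
          · exact hst (sub_eq_zero.mp h)
          · exact hkey s t h
        · rw [Set.mem_singleton_iff] at hR; exact hQR hR.symm
    · rw [Set.mem_singleton_iff] at hP; subst hP
      rcases hQ with ⟨s, rfl⟩ | hQ
      · rcases hR with ⟨t, rfl⟩ | hR
        · rw [coll3_mk_iff, hd2] at hcol
          have hst : s^2 ≠ t^2 := fun h => hQR ((mkH_eq_iff s t).mpr h)
          rcases mul_eq_zero.mp hcol with h | h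
          · exact hst (sub_eq_zero.mp h)
          · exact hkey s t h
        · rw [Set.mem_singleton_iff] at hR; exact hPR hR.symm
      · rw [Set.mem_singleton_iff] at hQ; exact hPQ hQ.symm
  · -- cardinality of the union
    have : Finite (Projectivization F (Fin 3 → F)) := Quotient.finite _
    rw [Set.union_singleton, Set.ncard_insert_of_notMem (by rintro ⟨s, hs⟩; exact hInfH s hs)
      (Set.toFinite _), hset_ncard q hcard hodd]
    have hodd2 : q % 2 = 1 := Nat.odd_iff.mp hodd
    omega
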